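/- Necessity of positivity: if there exists an interval I = [q₁,q₂] ⊂ (0,1) with ∫_I φ(p) dp < 0, then M_φ is not monotonous; specifically, there exist random variables X ≤ Y on a three-point probability space with M_φ(Y) > M_φ(X). -/

import Mathlib

open MeasureTheory

/-- The generalized inverse (lower quantile function) of the CDF of `X`. -/
noncomputable def qf {Ω : Type*} [MeasurableSpace Ω] (μ : Measure Ω) (X : Ω → ℝ) (p : ℝ) : ℝ :=
  sInf {x | p ≤ (μ {ω | X ω ≤ x}).toReal}

/-- The spectral risk measure generated by the risk spectrum `φ`. -/
noncomputable def Mphi {Ω : Type*} [MeasurableSpace Ω] (μ : Measure Ω)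
    (φ : ℝ → ℝ) (X : Ω → ℝ) : ℝ :=
  -∫ p in Set.Ioc (0:ℝ) 1, qf μ X p * φ p

lemma qf_eq_of_Ici {Ω : Type*} [MeasurableSpace Ω] (μ : Measure Ω) (X : Ω → ℝ) (p c : ℝ)
    (h : {x | p ≤ (μ {ω | X ω ≤ x}).toReal} = Set.Ici c) : qf μ X p = c := by
  rw [qf, h, csInf_Ici]

theorem positivity_necessary (φ : ℝ → ℝ)
    (hint : IntegrableOn φ (Set.Ioc (0:ℝ) 1))
    (q₁ q₂ : ℝ) (h0 : 0 < q₁) (h12 : q₁ < q₂) (h1 : q₂ < 1)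
    (hneg : (∫ p in Set.Ioc q₁ q₂, φ p) < 0) :
    ∃ (μ : Measure (Fin 3)) (X Y : Fin 3 → ℝ), IsProbabilityMeasure μ ∧
      (∀ ω, X ω ≤ Y ω) ∧ Mphi μ φ X < Mphi μ φ Y := by
  classical
  have hq1 : (0:ℝ) ≤ q₁ := h0.le
  have hq21 : (0:ℝ) ≤ q₂ - q₁ := by linarith
  have hq2' : (0:ℝ) ≤ 1 - q₂ := by linarith
  set μ : Measure (Fin 3) := (ENNReal.ofReal q₁) • Measure.dirac 0
      + (ENNReal.ofReal (q₂ - q₁)) • Measure.dirac 1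
      + (ENNReal.ofReal (1 - q₂)) • Measure.dirac 2 with hμ
  have key : ∀ (a : ℝ), 0 ≤ a → ∀ (t : Prop) [Decidable t],
      ENNReal.ofReal a * (if t then (1 : ENNReal) else 0) = ENNReal.ofReal (if t then a else 0) := by
    intro a ha t _
    split_ifs <;> simp
  have nn : ∀ (t : Prop) [Decidable t] (a : ℝ), 0 ≤ a → 0 ≤ (if t then a else 0) := by
    intro t _ a ha
    split_ifs <;> simp [ha]
  have hμs : ∀ s : Set (Fin 3), (μ s).toReal =
      (if (0:Fin 3) ∈ s then q₁ else 0) + ((if (1:Fin 3) ∈ s then q₂ - q₁ else 0)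
        + (if (2:Fin 3) ∈ s then 1 - q₂ else 0)) := by
    intro s
    simp only [hμ, Measure.add_apply, Measure.smul_apply, smul_eq_mul,
      Measure.dirac_apply, Set.indicator_apply, Pi.one_apply]
    rw [key q₁ hq1 _, key _ hq21 _, key _ hq2' _, ← ENNReal.ofReal_add (nn _ _ hq1) (nn _ _ hq21),
      ← ENNReal.ofReal_add (add_nonneg (nn _ _ hq1) (nn _ _ hq21)) (nn _ _ hq2'),
      ENNReal.toReal_ofReal (add_nonneg (add_nonneg (nn _ _ hq1) (nn _ _ hq21)) (nn _ _ hq2')),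
      add_assoc]
  set X : Fin 3 → ℝ := ![0, 0, 2] with hX
  set Y : Fin 3 → ℝ := ![0, 1, 2] with hY
  -- CDFs
  have hFX : ∀ x : ℝ, (μ {ω | X ω ≤ x}).toReal =
      (if (0:ℝ) ≤ x then q₁ else 0) + ((if (0:ℝ) ≤ x then q₂ - q₁ else 0)
        + (if (2:ℝ) ≤ x then 1 - q₂ else 0)) := by
    intro x
    rw [hμs]
    simp [hX, Set.mem_setOf_eq]
  have hFY : ∀ x : ℝ, (μ {ω | Y ω ≤ x}).toReal =
      (if (0:ℝ) ≤ x then q₁ else 0) + ((if (1:ℝ) ≤ x then q₂ - q₁ else 0)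
        + (if (2:ℝ) ≤ x then 1 - q₂ else 0)) := by
    intro x
    rw [hμs]
    simp [hY, Set.mem_setOf_eq]
  -- quantile functions
  have hqX1 : ∀ p ∈ Set.Ioc (0:ℝ) q₂, qf μ X p = 0 := by
    intro p hp
    apply qf_eq_of_Ici
    ext x
    simp only [Set.mem_setOf_eq, Set.mem_Ici, hFX]
    constructor
    · intro h
      by_contra hx
      push_neg at hx
      split_ifs at h <;> linarith [hp.1, hp.2]
    · intro hx
      split_ifs <;> linarith [hp.1, hp.2]
  have hqX2 : ∀ p ∈ Set.Ioc q₂ (1:ℝ), qf μ X p = 2 := by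
    intro p hp
    apply qf_eq_of_Ici
    ext x
    simp only [Set.mem_setOf_eq, Set.mem_Ici, hFX]
    constructor
    · intro h
      by_contra hx
      push_neg at hx
      split_ifs at h <;> linarith [hp.1, hp.2]
    · intro hx
      split_ifs <;> linarith [hp.1, hp.2]
  have hqY1 : ∀ p ∈ Set.Ioc (0:ℝ) q₁, qf μ Y p = 0 := by
    intro p hp
    apply qf_eq_of_Ici
    ext x
    simp only [Set.mem_setOf_eq, Set.mem_Ici, hFY]
    constructor
    · intro h
      by_contra hx
      push_neg at hx
      split_ifs at h <;> linarith [hp.1, hp.2]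
    · intro hx
      split_ifs <;> linarith [hp.1, hp.2]
  have hqY2 : ∀ p ∈ Set.Ioc q₁ q₂, qf μ Y p = 1 := by
    intro p hp
    apply qf_eq_of_Ici
    ext x
    simp only [Set.mem_setOf_eq, Set.mem_Ici, hFY]
    constructor
    · intro h
      by_contra hx
      push_neg at hx
      split_ifs at h <;> linarith [hp.1, hp.2]
    · intro hx
      split_ifs <;> linarith [hp.1, hp.2]
  have hqY3 : ∀ p ∈ Set.Ioc q₂ (1:ℝ), qf μ Y p = 2 := by
    intro p hp
    apply qf_eq_of_Ici
    ext x
    simp only [Set.mem_setOf_eq, Set.mem_Ici, hFY]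
    constructor
    · intro h
      by_contra hx
      push_neg at hx
      split_ifs at h <;> linarith [hp.1, hp.2]
    · intro hx
      split_ifs <;> linarith [hp.1, hp.2]
  -- integrability on pieces
  have hi2 : IntegrableOn φ (Set.Ioc q₁ q₂) := hint.mono_set (Set.Ioc_subset_Ioc h0.le h1.le)
  have hi3 : IntegrableOn φ (Set.Ioc q₂ (1:ℝ)) := hint.mono_set (Set.Ioc_subset_Ioc (by linarith) le_rfl)
  -- integral of qf X * φ
  have eX1 : (∫ p in Set.Ioc (0:ℝ) q₂, qf μ X p * φ p) = 0 := by
    rw [setIntegral_congr_fun measurableSet_Ioc (g := fun _ => (0:ℝ))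
      (fun p hp => by simp [hqX1 p hp])]
    simp
  have eX2 : (∫ p in Set.Ioc q₂ (1:ℝ), qf μ X p * φ p) = 2 * ∫ p in Set.Ioc q₂ (1:ℝ), φ p := by
    rw [setIntegral_congr_fun measurableSet_Ioc (g := fun p => 2 * φ p)
      (fun p hp => by simp [hqX2 p hp]), integral_const_mul]
  have intX1 : IntegrableOn (fun p => qf μ X p * φ p) (Set.Ioc (0:ℝ) q₂) :=
    IntegrableOn.congr_fun (integrableOn_zero)
      (fun p hp => by simp [hqX1 p hp]) measurableSet_Ioc
  have intX2 : IntegrableOn (fun p => qf μ X p * φ p) (Set.Ioc q₂ (1:ℝ)) :=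
    IntegrableOn.congr_fun (hi3.const_mul 2)
      (fun p hp => by simp [hqX2 p hp]) measurableSet_Ioc
  have hIX : (∫ p in Set.Ioc (0:ℝ) 1, qf μ X p * φ p) = 2 * ∫ p in Set.Ioc q₂ (1:ℝ), φ p := by
    rw [← Set.Ioc_union_Ioc_eq_Ioc (by linarith : (0:ℝ) ≤ q₂) h1.le,
      setIntegral_union (Set.Ioc_disjoint_Ioc_of_le le_rfl) measurableSet_Ioc intX1 intX2, eX1, eX2,
      zero_add]
  -- integral of qf Y * φ
  have eY1 : (∫ p in Set.Ioc (0:ℝ) q₁, qf μ Y p * φ p) = 0 := by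
    rw [setIntegral_congr_fun measurableSet_Ioc (g := fun _ => (0:ℝ))
      (fun p hp => by simp [hqY1 p hp])]
    simp
  have eY2 : (∫ p in Set.Ioc q₁ q₂, qf μ Y p * φ p) = ∫ p in Set.Ioc q₁ q₂, φ p :=
    setIntegral_congr_fun measurableSet_Ioc (fun p hp => by simp [hqY2 p hp])
  have eY3 : (∫ p in Set.Ioc q₂ (1:ℝ), qf μ Y p * φ p) = 2 * ∫ p in Set.Ioc q₂ (1:ℝ), φ p := by
    rw [setIntegral_congr_fun measurableSet_Ioc (g := fun p => 2 * φ p)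
      (fun p hp => by simp [hqY3 p hp]), integral_const_mul]
  have intY1 : IntegrableOn (fun p => qf μ Y p * φ p) (Set.Ioc (0:ℝ) q₁) :=
    IntegrableOn.congr_fun (integrableOn_zero)
      (fun p hp => by simp [hqY1 p hp]) measurableSet_Ioc
  have intY2 : IntegrableOn (fun p => qf μ Y p * φ p) (Set.Ioc q₁ q₂) :=
    IntegrableOn.congr_fun hi2 (fun p hp => by simp [hqY2 p hp]) measurableSet_Ioc
  have intY3 : IntegrableOn (fun p => qf μ Y p * φ p) (Set.Ioc q₂ (1:ℝ)) :=
    IntegrableOn.congr_fun (hi3.const_mul 2)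
      (fun p hp => by simp [hqY3 p hp]) measurableSet_Ioc
  have hd : Disjoint (Set.Ioc (0:ℝ) q₁) (Set.Ioc q₁ q₂ ∪ Set.Ioc q₂ 1) := by
    rw [Set.disjoint_union_right]
    exact ⟨(Set.Ioc_disjoint_Ioc_of_le le_rfl),
      (Set.Ioc_disjoint_Ioc_of_le le_rfl).mono_right (Set.Ioc_subset_Ioc_left h12.le)⟩
  have hIY : (∫ p in Set.Ioc (0:ℝ) 1, qf μ Y p * φ p) =
      (∫ p in Set.Ioc q₁ q₂, φ p) + 2 * ∫ p in Set.Ioc q₂ (1:ℝ), φ p := by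
    have hsplit : Set.Ioc (0:ℝ) 1 = Set.Ioc (0:ℝ) q₁ ∪ (Set.Ioc q₁ q₂ ∪ Set.Ioc q₂ 1) := by
      rw [Set.Ioc_union_Ioc_eq_Ioc h12.le h1.le,
        Set.Ioc_union_Ioc_eq_Ioc h0.le (by linarith)]
    rw [hsplit,
      setIntegral_union hd (measurableSet_Ioc.union measurableSet_Ioc) intY1 (intY2.union intY3),
      setIntegral_union (Set.Ioc_disjoint_Ioc_of_le le_rfl) measurableSet_Ioc intY2 intY3,
      eY1, eY2, eY3, zero_add]
  refine ⟨μ, X, Y, ?_, ?_, ?_⟩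
  · constructor
    rw [hμ]
    simp only [Measure.add_apply, Measure.smul_apply, smul_eq_mul, Measure.dirac_apply,
      Set.indicator_apply, Set.mem_univ, if_true, Pi.one_apply, mul_one]
    rw [← ENNReal.ofReal_add hq1 hq21, ← ENNReal.ofReal_add (by linarith) hq2']
    norm_num
  · intro ω
    fin_cases ω <;> simp [hX, hY]
  · rw [Mphi, Mphi, hIX, hIY]
    linarith
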